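/- arXiv:2206.04260 — 7 statements merged into one kernel-verified Lean document; each statement's English description precedes it below -/
import Mathlib

section
/- For any a, b ≥ 2, any configuration (a 2-coloring of the complete 3-uniform hypergraph on a linearly ordered finite vertex set, with colors 'cap' and 'cup') of size greater than C(a+b-4, a-2) contains an a-cap or a b-cup, where an a-cap (resp. a-cup) is a set of a vertices x_1 < ... < x_a such that every three consecutive vertices are colored cap (resp. cup). -/
variable {α : Type*} [LinearOrder α]

/-- Every consecutive triple of the list satisfies `f`. -/
def Triples (f : α → α → α → Prop) : List α → Prop
  | x :: y :: z :: l => f x y z ∧ Triples f (y :: z :: l)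
  | _ => True

/-- `l` is a cup in the configuration `(S, cup)`: a nonempty increasing list of
vertices of `S` all of whose consecutive triples are colored cup. -/
def IsCupIn (S : Finset α) (cup : α → α → α → Prop) (l : List α) : Prop :=
  l ≠ [] ∧ l.Chain' (· < ·) ∧ (∀ x ∈ l, x ∈ S) ∧ Triples cup l

/-- `l` is a cap in the configuration `(S, cup)`. -/
def IsCapIn (S : Finset α) (cup : α → α → α → Prop) (l : List α) : Prop :=
  l ≠ [] ∧ l.Chain' (· < ·) ∧ (∀ x ∈ l, x ∈ S) ∧ Triples (fun x y z => ¬ cup x y z) l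

/-- The configuration has no cap with `a` (or more) vertices. -/
def CapFree (S : Finset α) (cup : α → α → α → Prop) (a : ℕ) : Prop :=
  ∀ l : List α, IsCapIn S cup l → l.length < a

/-- The configuration has no cup with `b` (or more) vertices. -/
def CupFree (S : Finset α) (cup : α → α → α → Prop) (b : ℕ) : Prop :=
  ∀ l : List α, IsCupIn S cup l → l.length < b

def StartsAt (l : List α) (p : α) : Prop := l.head? = some p

def EndsAt (l : List α) (p : α) : Prop := l.getLast? = some p

/-- A weak `(a, b)`-gon: an `a`-cap and a `b`-cup sharing both endpoints. -/
def HasWeakGon (S : Finset α) (cup : α → α → α → Prop) (a b : ℕ) : Prop :=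
  ∃ (A U : List α) (x y : α), IsCapIn S cup A ∧ A.length = a ∧
    IsCupIn S cup U ∧ U.length = b ∧
    StartsAt A x ∧ StartsAt U x ∧ EndsAt A y ∧ EndsAt U y

/-- Two cups from `p` to `r` and from `q` to `s` are interweaved if `p < q ≤ r < s`. -/
def Interweaved (C₁ C₂ : List α) : Prop :=
  ∃ p r q s, StartsAt C₁ p ∧ EndsAt C₁ r ∧ StartsAt C₂ q ∧ EndsAt C₂ s ∧
    p < q ∧ q ≤ r ∧ r < s

/-- A laced `(n-1)`-cup: an `(n-1)`-cup from `p` to `q` together with a cup ending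
at `p` and a cup starting at `q` whose sizes sum to `n - 1`. -/
def IsLacedCup (S : Finset α) (cup : α → α → α → Prop) (n : ℕ) (C : List α) : Prop :=
  IsCupIn S cup C ∧ C.length = n - 1 ∧
  ∃ p q Cp Cq, StartsAt C p ∧ EndsAt C q ∧ IsCupIn S cup Cp ∧ IsCupIn S cup Cq ∧
    EndsAt Cp p ∧ StartsAt Cq q ∧ Cp.length + Cq.length = n - 1

/-- A slope labeling of an `a`-cap-free configuration: labels in `{1, …, a-2}`
such that `s x y ≤ s y z` forces `x y z` to be a cup. -/
def IsSlopeLabeling (S : Finset α) (cup : α → α → α → Prop) (a : ℕ) (s : α → α → ℕ) : Prop :=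
  (∀ x ∈ S, ∀ y ∈ S, x < y → 1 ≤ s x y ∧ s x y ≤ a - 2) ∧
  (∀ x ∈ S, ∀ y ∈ S, ∀ z ∈ S, x < y → y < z → s x y ≤ s y z → cup x y z)

/-- `α_i(p)`: maximum length of a cup ending at `p` with last edge of label `≤ i`
(`1` if there is no such cup). -/
noncomputable def alphaStat (S : Finset α) (cup : α → α → α → Prop) (s : α → α → ℕ)
    (i : ℕ) (p : α) : ℕ :=
  max 1 (sSup {k | ∃ (l : List α) (x : α), IsCupIn S cup l ∧ EndsAt l p ∧
    l.length = k ∧ l.dropLast.getLast? = some x ∧ s x p ≤ i})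

/-- `β(p)`: maximum length of a cup ending at `p` (`1` if there is none). -/
noncomputable def betaStat (S : Finset α) (cup : α → α → α → Prop) (p : α) : ℕ :=
  max 1 (sSup {k | ∃ l : List α, IsCupIn S cup l ∧ EndsAt l p ∧ l.length = k})

/-- The cup coloring of the mirror reflection. -/
def opCup (cup : α → α → α → Prop) : αᵒᵈ → αᵒᵈ → αᵒᵈ → Prop :=
  fun x y z => cup (OrderDual.ofDual z) (OrderDual.ofDual y) (OrderDual.ofDual x)

/-- The vertex set of the mirror reflection. -/
def opSet (S : Finset α) : Finset αᵒᵈ := S.map OrderDual.toDual.toEmbedding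

/-- The mirror reflection of a cap/cup. -/
def opList (l : List α) : List αᵒᵈ := (l.map OrderDual.toDual).reverse

theorem triples_iff_infix (f : α → α → α → Prop) :
    ∀ l : List α, Triples f l ↔ ∀ x y z : α, [x, y, z] <:+: l → f x y z
  | [] => by
    constructor
    · intro _ x y z h; exact absurd h.length_le (by simp)
    · intro _; trivial
  | [a] => by
    constructor
    · intro _ x y z h; exact absurd h.length_le (by simp)
    · intro _; trivial
  | [a, b] => by
    constructor
    · intro _ x y z h; exact absurd h.length_le (by simp)
    · intro _; trivial
  | a :: b :: c :: t => by
    rw [show Triples f (a :: b :: c :: t) = (f a b c ∧ Triples f (b :: c :: t)) from rfl,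
      triples_iff_infix f (b :: c :: t)]
    constructor
    · rintro ⟨h1, h2⟩ x y z hinf
      rcases List.infix_cons_iff.mp hinf with hp | hi
      · rw [List.cons_prefix_cons] at hp
        obtain ⟨rfl, hp⟩ := hp
        rw [List.cons_prefix_cons] at hp
        obtain ⟨rfl, hp⟩ := hp
        rw [List.cons_prefix_cons] at hp
        obtain ⟨rfl, _⟩ := hp
        exact h1
      · exact h2 x y z hi
    · intro h
      refine ⟨h a b c ⟨[], t, rfl⟩, fun x y z hi => h x y z (hi.trans (List.suffix_cons a (b::c::t)).isInfix)⟩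

theorem triples_of_reverse {f : α → α → α → Prop} {l : List α}
    (h : Triples (fun x y z => f z y x) l.reverse) : Triples f l := by
  rw [triples_iff_infix] at h ⊢
  intro x y z hinf
  exact h z y x (by simpa using List.reverse_infix.mpr hinf)

theorem triples_reverse_of {f : α → α → α → Prop} {l : List α}
    (h : Triples f l) : Triples (fun x y z => f z y x) l.reverse := by
  rw [triples_iff_infix] at h ⊢
  intro x y z hinf
  refine h z y x ?_
  have := List.reverse_infix.mpr hinf
  simpa using this

theorem IsCupIn.mono {S S' : Finset α} {f : α → α → α → Prop} {l : List α}
    (h : IsCupIn S f l) (hS : S ⊆ S') : IsCupIn S' f l :=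
  ⟨h.1, h.2.1, fun x hx => hS (h.2.2.1 x hx), h.2.2.2⟩

theorem isCupIn_pair {S : Finset α} {f : α → α → α → Prop} {x y : α}
    (hx : x ∈ S) (hy : y ∈ S) (hxy : x < y) : IsCupIn S f [x, y] :=
  ⟨by simp, List.isChain_pair.mpr hxy, by
    intro z hz
    simp only [List.mem_cons, List.not_mem_nil, or_false, List.mem_singleton] at hz
    rcases hz with rfl | rfl
    exacts [hx, hy], trivial⟩

theorem es_main : ∀ n a b : ℕ, a + b ≤ n → 2 ≤ a → 2 ≤ b →
    ∀ (S : Finset α) (f g : α → α → α → Prop),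
    (∀ x ∈ S, ∀ y ∈ S, ∀ z ∈ S, x < y → y < z → f x y z ∨ g x y z) →
    Nat.choose (a + b - 4) (a - 2) < S.card →
    (∃ l : List α, IsCupIn S f l ∧ l.length = a) ∨
    (∃ l : List α, IsCupIn S g l ∧ l.length = b) := by
  intro n
  induction n using Nat.strong_induction_on with
  | _ n IH =>
  intro a b hab ha hb S f g hfg hcard
  classical
  -- base case a = 2
  rcases eq_or_lt_of_le ha with rfl | ha3
  · have h1 : (2 + b - 4).choose (2 - 2) = 1 := by simp
    have h2 : 1 < S.card := by omega
    obtain ⟨x, hx, y, hy, hne⟩ := Finset.one_lt_card.mp h2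
    rcases hne.lt_or_gt with h | h
    · exact Or.inl ⟨[x, y], isCupIn_pair hx hy h, by simp⟩
    · exact Or.inl ⟨[y, x], isCupIn_pair hy hx h, by simp⟩
  rcases eq_or_lt_of_le hb with rfl | hb3
  · have h1 : (a + 2 - 4).choose (a - 2) = 1 := by
      rw [show a + 2 - 4 = a - 2 by omega, Nat.choose_self]
    have h2 : 1 < S.card := by omega
    obtain ⟨x, hx, y, hy, hne⟩ := Finset.one_lt_card.mp h2
    rcases hne.lt_or_gt with h | h
    · exact Or.inr ⟨[x, y], isCupIn_pair hx hy h, by simp⟩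
    · exact Or.inr ⟨[y, x], isCupIn_pair hy hx h, by simp⟩
  -- main case: 3 ≤ a, 3 ≤ b
  by_contra hcon
  push_neg at hcon
  obtain ⟨hA, hB⟩ := hcon
  have hpas : (a + b - 4).choose (a - 2)
      = (a + b - 5).choose (a - 3) + (a + b - 5).choose (a - 2) := by
    rw [show a + b - 4 = (a + b - 5) + 1 by omega, show a - 2 = (a - 3) + 1 by omega,
      Nat.choose_succ_succ]
  set T : Finset α := S.filter
    (fun p => ∃ l : List α, IsCupIn S f l ∧ l.length = a - 1 ∧ l.head? = some p) with hT
  have hTsub : T ⊆ S := Finset.filter_subset _ _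
  -- (S \ T) has card ≤ choose (a+b-5) (a-3)
  have hST : (S \ T).card ≤ (a + b - 5).choose (a - 3) := by
    by_contra hc
    push_neg at hc
    have := IH (a - 1 + b) (by omega) (a - 1) b le_rfl (by omega) (by omega) (S \ T) f g
      (fun x hx y hy z hz => hfg x (Finset.sdiff_subset hx) y (Finset.sdiff_subset hy)
        z (Finset.sdiff_subset hz))
      (by rw [show a - 1 + b - 4 = a + b - 5 by omega, show a - 1 - 2 = a - 3 by omega]; exact hc)
    rcases this with ⟨l, hl, hlen⟩ | ⟨l, hl, hlen⟩
    · -- head of l is in T and in S \ T: contradiction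
      obtain ⟨p, l', rfl⟩ := List.exists_cons_of_ne_nil hl.1
      have hp : (p :: l').head? = some p := rfl
      have hpl : p ∈ p :: l' := List.mem_cons_self
      set l := p :: l'
      have hpST : p ∈ S \ T := hl.2.2.1 p hpl
      have hpT : p ∈ T := by
        rw [hT, Finset.mem_filter]
        exact ⟨(Finset.mem_sdiff.mp hpST).1, l, hl.mono Finset.sdiff_subset, hlen, hp⟩
      exact (Finset.mem_sdiff.mp hpST).2 hpT
    · exact hB l (hl.mono Finset.sdiff_subset) hlen
  have hTcard : (a + b - 5).choose (a - 2) < T.card := by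
    have h1 : (S \ T).card = S.card - T.card := Finset.card_sdiff_of_subset hTsub
    have h2 : T.card ≤ S.card := Finset.card_le_card hTsub
    omega
  -- apply IH to T with (a, b-1)
  have := IH (a + (b - 1)) (by omega) a (b - 1) le_rfl (by omega) (by omega) T f g
    (fun x hx y hy z hz => hfg x (hTsub hx) y (hTsub hy) z (hTsub hz))
    (by rw [show a + (b - 1) - 4 = a + b - 5 by omega]; exact hTcard)
  rcases this with ⟨l, hl, hlen⟩ | ⟨U, hU, hUlen⟩
  · exact hA l (hl.mono hTsub) hlen
  -- U is a (b-1)-cup in T; destructure its reverse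
  have hUlen2 : 2 ≤ U.length := by omega
  rcases hrev : U.reverse with _ | ⟨q, _ | ⟨y, W⟩⟩
  · have : U.length = 0 := by simpa using congrArg List.length hrev
    omega
  · have : U.length = 1 := by simpa using congrArg List.length hrev
    omega
  have hqU : q ∈ U := by
    have : q ∈ U.reverse := by rw [hrev]; simp
    simpa using this
  have hyU : y ∈ U := by
    have : y ∈ U.reverse := by rw [hrev]; simp
    simpa using this
  have hqT : q ∈ T := hU.2.2.1 q hqU
  have hqS : q ∈ S := hTsub hqT
  have hyS : y ∈ S := hTsub (hU.2.2.1 y hyU)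
  have hlast : U.getLast? = some q := by
    rw [← List.head?_reverse, hrev]; rfl
  have hyq : y < q := by
    have hc : U.reverse.Chain' (fun x y => y < x) := by
      show U.reverse.IsChain (fun x y => y < x)
      rw [List.isChain_reverse]
      exact hU.2.1
    rw [hrev] at hc
    exact hc.rel_head
  -- get the (a-1)-cap A starting at q
  obtain ⟨-, A, hAcup, hAlen, hAhead⟩ := Finset.mem_filter.mp hqT
  rcases A with _ | ⟨q0, _ | ⟨q', A'⟩⟩
  · simp_all
  · simp at hAlen; omega
  have hq0 : q = q0 := by simpa using hAhead.symm
  subst hq0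
  have hqq' : q < q' := hAcup.2.1.rel_head
  have hq'S : q' ∈ S := hAcup.2.2.1 q' (by simp)
  rcases hfg y hyS q hqS q' hq'S hyq hqq' with hf | hg
  · -- y :: A is an a-cup for f
    refine hA (y :: q :: q' :: A') ⟨by simp, ?_, ?_, hf, hAcup.2.2.2⟩ (by
      have := hAlen; simp at this ⊢; omega)
    · exact List.isChain_cons_cons.mpr ⟨hyq, hAcup.2.1⟩
    · intro x hx
      rw [List.mem_cons] at hx
      rcases hx with rfl | hx
      · exact hyS
      · exact hAcup.2.2.1 x hx
  · -- U ++ [q'] is a b-cup for g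
    refine hB (U ++ [q']) ⟨by simp, ?_, ?_, ?_⟩ (by simp; omega)
    · show List.IsChain (· < ·) (U ++ [q'])
      rw [List.isChain_append]
      refine ⟨hU.2.1, by simp, ?_⟩
      intro x hx z hz
      rw [hlast] at hx
      simp at hx hz
      subst hx; subst hz
      exact hqq'
    · intro x hx
      rcases List.mem_append.mp hx with h | h
      · exact hTsub (hU.2.2.1 x h)
      · simp at h; subst h; exact hq'S
    · apply triples_of_reverse
      rw [show (U ++ [q']).reverse = q' :: q :: y :: W by rw [List.reverse_append, hrev]; rfl]
      exact ⟨hg, hrev ▸ triples_reverse_of hU.2.2.2⟩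

theorem stmt1 (a b : ℕ) (ha : 2 ≤ a) (hb : 2 ≤ b)
    (S : Finset α) (cup : α → α → α → Prop)
    (hcard : Nat.choose (a + b - 4) (a - 2) < S.card) :
    (∃ l : List α, IsCapIn S cup l ∧ l.length = a) ∨
    (∃ l : List α, IsCupIn S cup l ∧ l.length = b) := by
  have := es_main (a + b) a b le_rfl ha hb S (fun x y z => ¬ cup x y z) cup
    (fun x _ y _ z _ _ _ => (em (cup x y z)).symm) hcard
  exact this
end

section
/- For any a, b ≥ 2 there exists a configuration of size exactly C(a+b-4, a-2) containing no a-cap and no b-cup; hence the maximum size of an a-cap-free and b-cup-free configuration is exactly C(a+b-4, a-2). -/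
variable {α : Type*} [LinearOrder α]

set_option linter.unusedSectionVars false

theorem triples_iff (f : α → α → α → Prop) :
    ∀ l : List α, Triples f l ↔ ∀ u x y z v, l = u ++ x :: y :: z :: v → f x y z := by
  intro l
  induction l with
  | nil =>
      simp only [Triples, true_iff]
      intro u x y z v h
      have := congrArg List.length h
      simp at this
  | cons a t IH =>
      rcases t with _ | ⟨b, t⟩
      · simp only [Triples, true_iff]
        intro u x y z v h
        have := congrArg List.length h
        simp at this; omega
      rcases t with _ | ⟨c, t⟩
      · simp only [Triples, true_iff]
        intro u x y z v h
        have := congrArg List.length h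
        simp at this; omega
      · show f a b c ∧ Triples f (b :: c :: t) ↔ _
        constructor
        · rintro ⟨h1, h2⟩ u x y z v heq
          rcases u with _ | ⟨d, u⟩
          · simp only [List.nil_append, List.cons.injEq] at heq
            obtain ⟨rfl, rfl, rfl, -⟩ := heq
            exact h1
          · simp only [List.cons_append, List.cons.injEq] at heq
            exact (IH.mp h2) u x y z v heq.2
        · intro h
          refine ⟨h [] a b c t rfl, IH.mpr ?_⟩
          intro u x y z v heq
          exact h (a :: u) x y z v (by rw [heq]; rfl)

theorem triples_infix {f : α → α → α → Prop} {l l' : List α} (h : Triples f l)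
    (hinf : l' <:+: l) : Triples f l' := by
  rcases hinf with ⟨s, t, rfl⟩
  rw [triples_iff] at h ⊢
  intro u x y z v heq
  subst heq
  exact h (s ++ u) x y z (v ++ t) (by simp)

theorem isCapIn_infix {S : Finset α} {cup : α → α → α → Prop} {l l' : List α}
    (h : IsCapIn S cup l) (hne : l' ≠ []) (hinf : l' <:+: l) : IsCapIn S cup l' :=
  ⟨hne, h.2.1.sublist hinf.sublist, fun x hx => h.2.2.1 x (hinf.sublist.subset hx),
    triples_infix h.2.2.2 hinf⟩

theorem isCupIn_infix {S : Finset α} {cup : α → α → α → Prop} {l l' : List α}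
    (h : IsCupIn S cup l) (hne : l' ≠ []) (hinf : l' <:+: l) : IsCupIn S cup l' :=
  ⟨hne, h.2.1.sublist hinf.sublist, fun x hx => h.2.2.1 x (hinf.sublist.subset hx),
    triples_infix h.2.2.2 hinf⟩

theorem triples_concat {f : α → α → α → Prop} {l : List α} {x p y : α}
    (h : Triples f (l ++ [x, p])) (hf : f x p y) : Triples f (l ++ [x, p, y]) := by
  rw [triples_iff] at h ⊢
  intro u c d e v heq
  rcases List.eq_nil_or_concat v with rfl | ⟨v', w, rfl⟩
  · have := congrArg List.reverse heq
    simp only [List.reverse_append, List.reverse_cons, List.reverse_nil, List.nil_append,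
      List.cons_append, List.cons.injEq] at this
    obtain ⟨rfl, rfl, rfl, -⟩ := this
    exact hf
  · have heq' : (l ++ [x, p]) ++ [y] = (u ++ c :: d :: e :: v') ++ [w] := by
      simpa [List.concat_eq_append] using heq
    have h2 := (List.append_inj' heq' rfl).1
    exact h u c d e v' h2

theorem exists_last_two {l : List α} (h : 2 ≤ l.length) : ∃ M x y, l = M ++ [x, y] := by
  rcases List.eq_nil_or_concat l with rfl | ⟨l', y, rfl⟩
  · simp at h
  rcases List.eq_nil_or_concat l' with rfl | ⟨l'', x, rfl⟩
  · simp at h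
  · exact ⟨l'', x, y, by simp⟩

theorem pair_cap {S : Finset α} {cup : α → α → α → Prop} {x y : α}
    (hx : x ∈ S) (hy : y ∈ S) (hxy : x < y) : IsCapIn S cup [x, y] := by
  refine ⟨by simp, List.isChain_pair.mpr hxy, ?_, trivial⟩
  intro z hz
  rcases List.mem_cons.mp hz with rfl | hz
  · exact hx
  · simp only [List.mem_singleton] at hz; subst hz; exact hy

theorem pair_cup {S : Finset α} {cup : α → α → α → Prop} {x y : α}
    (hx : x ∈ S) (hy : y ∈ S) (hxy : x < y) : IsCupIn S cup [x, y] := by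
  refine ⟨by simp, List.isChain_pair.mpr hxy, ?_, trivial⟩
  intro z hz
  rcases List.mem_cons.mp hz with rfl | hz
  · exact hx
  · simp only [List.mem_singleton] at hz; subst hz; exact hy

theorem upper_aux : ∀ N a b, a + b ≤ N → 2 ≤ a → 2 ≤ b →
    ∀ {β : Type} [LinearOrder β] (S : Finset β) (cup : β → β → β → Prop),
      (¬ ∃ l, IsCapIn S cup l ∧ l.length = a) →
      (¬ ∃ l, IsCupIn S cup l ∧ l.length = b) →
      S.card ≤ Nat.choose (a + b - 4) (a - 2) := by
  intro N
  induction N with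
  | zero => intro a b h ha hb; omega
  | succ N IH =>
    intro a b hab ha hb β _ S cup hcap hcup
    by_cases ha2 : a = 2
    · subst ha2
      have h1 : S.card ≤ 1 := by
        rw [Finset.card_le_one]
        intro x hx y hy
        by_contra hne
        rcases lt_or_gt_of_ne hne with hlt | hlt
        · exact hcap ⟨[x, y], pair_cap hx hy hlt, rfl⟩
        · exact hcap ⟨[y, x], pair_cap hy hx hlt, rfl⟩
      have : Nat.choose (2 + b - 4) (2 - 2) = 1 := by norm_num
      omega
    by_cases hb2 : b = 2
    · subst hb2
      have h1 : S.card ≤ 1 := by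
        rw [Finset.card_le_one]
        intro x hx y hy
        by_contra hne
        rcases lt_or_gt_of_ne hne with hlt | hlt
        · exact hcup ⟨[x, y], pair_cup hx hy hlt, rfl⟩
        · exact hcup ⟨[y, x], pair_cup hy hx hlt, rfl⟩
      have h2 : Nat.choose (a + 2 - 4) (a - 2) = 1 := by
        have : a + 2 - 4 = a - 2 := by omega
        rw [this, Nat.choose_self]
      omega
    -- main case: a ≥ 3, b ≥ 3
    classical
    set P : β → Prop := fun p => ∃ l, IsCapIn S cup l ∧ l.length = a - 1 ∧ l.getLast? = some p
      with hPdef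
    have hcard : (S.filter P).card + (S.filter fun p => ¬ P p).card = S.card :=
      Finset.card_filter_add_card_filter_not _
    have hF : (S.filter fun p => ¬ P p).card ≤ Nat.choose ((a-1) + b - 4) ((a-1) - 2) := by
      apply IH (a-1) b (by omega) (by omega) hb
      · rintro ⟨l, hl, hlen⟩
        have hlS : IsCapIn S cup l :=
          ⟨hl.1, hl.2.1, fun x hx => (Finset.mem_filter.mp (hl.2.2.1 x hx)).1, hl.2.2.2⟩
        have hne := hl.1
        have hPlast : P (l.getLast hne) := ⟨l, hlS, hlen, List.getLast?_eq_getLast hne⟩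
        exact (Finset.mem_filter.mp (hl.2.2.1 _ (List.getLast_mem hne))).2 hPlast
      · rintro ⟨l, hl, hlen⟩
        exact hcup ⟨l, ⟨hl.1, hl.2.1, fun x hx => (Finset.mem_filter.mp (hl.2.2.1 x hx)).1,
          hl.2.2.2⟩, hlen⟩
    have hE : (S.filter P).card ≤ Nat.choose (a + (b-1) - 4) (a - 2) := by
      apply IH a (b-1) (by omega) ha (by omega)
      · rintro ⟨l, hl, hlen⟩
        exact hcap ⟨l, ⟨hl.1, hl.2.1, fun x hx => (Finset.mem_filter.mp (hl.2.2.1 x hx)).1,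
          hl.2.2.2⟩, hlen⟩
      · rintro ⟨U, hU, hUlen⟩
        rcases U with _ | ⟨p, U⟩
        · exact hU.1 rfl
        rcases U with _ | ⟨y, U'⟩
        · simp at hUlen; omega
        -- p ∈ E, so there is an (a-1)-cap ending at p
        have hpE : p ∈ S.filter P := hU.2.2.1 p (by simp)
        obtain ⟨A, hA, hAlen, hAend⟩ := (Finset.mem_filter.mp hpE).2
        have hA2 : 2 ≤ A.length := by omega
        obtain ⟨M, x, q, rfl⟩ := exists_last_two hA2
        have hre : M ++ [x, q] = (M ++ [x]) ++ [q] := by simp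
        have hlast : (M ++ [x, q]).getLast? = some q := by
          rw [hre, List.getLast?_concat]
        have hp' : q = p := by rw [hlast] at hAend; exact Option.some.inj hAend
        subst hp'
        have hxp : x < q := by
          have hsub : List.Sublist [x, q] (M ++ [x, q]) := List.sublist_append_right M [x, q]
          have := hA.2.1.sublist hsub
          exact (List.isChain_cons_cons.mp this).1
        have hpy : q < y := (List.isChain_cons_cons.mp hU.2.1).1
        have hxS : x ∈ S := hA.2.2.1 x (by simp)
        have hUS : ∀ z ∈ q :: y :: U', z ∈ S :=
          fun z hz => (Finset.mem_filter.mp (hU.2.2.1 z hz)).1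
        by_cases hc : cup x q y
        · -- extend the cup at the front
          refine absurd ⟨x :: q :: y :: U', ⟨by simp, ?_, ?_, ?_⟩, ?_⟩ hcup
          · exact List.isChain_cons_cons.mpr ⟨hxp, hU.2.1⟩
          · intro z hz
            rcases List.mem_cons.mp hz with rfl | hz
            · exact hxS
            · exact hUS z hz
          · exact ⟨hc, hU.2.2.2⟩
          · simp only [List.length_cons] at hUlen ⊢; omega
        · -- extend the cap at the back
          refine absurd ⟨M ++ [x, q, y], ⟨by simp, ?_, ?_, ?_⟩, ?_⟩ hcap
          · have he : M ++ [x, q, y] = (M ++ [x, q]) ++ [y] := by simp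
            rw [he]
            refine List.isChain_append.mpr ⟨hA.2.1, by simp, ?_⟩
            intro c hcl d hd
            simp only [List.head?_cons, Option.mem_def, Option.some.injEq] at hd
            subst hd
            rw [hlast] at hcl
            simp only [Option.mem_def, Option.some.injEq] at hcl
            subst hcl
            exact hpy
          · intro z hz
            simp only [List.mem_append, List.mem_cons, List.not_mem_nil, or_false] at hz
            rcases hz with hz | rfl | hz | hz
            · exact hA.2.2.1 z (by simp [hz])
            · exact hxS
            · exact hUS z (by simp [hz])
            · exact hUS z (by simp [hz])
          · exact triples_concat hA.2.2.2 hc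
          · have := hAlen
            simp only [List.length_append, List.length_cons, List.length_nil] at this ⊢
            omega
    have e1 : a + b - 4 = (a + b - 5) + 1 := by omega
    have e2 : a - 2 = (a - 3) + 1 := by omega
    have e3 : (a-1) + b - 4 = a + b - 5 := by omega
    have e4 : (a-1) - 2 = a - 3 := by omega
    have e5 : a + (b-1) - 4 = a + b - 5 := by omega
    rw [e1, e2, Nat.choose_succ_succ]
    simp only [Nat.succ_eq_add_one]
    rw [e3, e4] at hF
    rw [e5, e2] at hE
    omega

theorem short_of_subsingleton {S : Finset ℕ} (hS : ∀ x ∈ S, ∀ y ∈ S, x = y)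
    {l : List ℕ} (hc : l.Chain' (· < ·)) (hm : ∀ x ∈ l, x ∈ S) : l.length ≤ 1 := by
  rcases l with _ | ⟨x, _ | ⟨y, t⟩⟩
  · simp
  · simp
  · exfalso
    have hxy : x < y := (List.isChain_cons_cons.mp hc).1
    exact absurd (hS x (hm x (by simp)) y (hm y (by simp))) (ne_of_lt hxy)

theorem singleton_case (N c m n : ℕ) (hc : c = 1) :
    ∃ cup : ℕ → ℕ → ℕ → Prop,
      (¬ ∃ l, IsCapIn (Finset.Ico N (N + c)) cup l ∧ l.length = m + 2) ∧
      (¬ ∃ l, IsCupIn (Finset.Ico N (N + c)) cup l ∧ l.length = n + 2) := by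
  subst hc
  have hsub : ∀ x ∈ Finset.Ico N (N+1), ∀ y ∈ Finset.Ico N (N+1), x = y := by
    intro x hx y hy
    have h1 := Finset.mem_Ico.mp hx
    have h2 := Finset.mem_Ico.mp hy
    omega
  refine ⟨fun _ _ _ => True, ?_, ?_⟩ <;>
  · rintro ⟨l, hl, hlen⟩
    have := short_of_subsingleton hsub hl.2.1 hl.2.2.1
    omega

theorem split_lt (Mv : ℕ) : ∀ l : List ℕ, l.Pairwise (· < ·) →
    ∃ l₁ l₂, l = l₁ ++ l₂ ∧ (∀ x ∈ l₁, x < Mv) ∧ (∀ x ∈ l₂, Mv ≤ x) := by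
  intro l
  induction l with
  | nil => exact fun _ => ⟨[], [], by simp, by simp, by simp⟩
  | cons a t IH =>
    intro hp
    rcases lt_or_ge a Mv with h | h
    · obtain ⟨t₁, t₂, heq, H1, H2⟩ := IH hp.of_cons
      refine ⟨a :: t₁, t₂, by simp [heq], ?_, H2⟩
      intro x hx
      rcases List.mem_cons.mp hx with rfl | hx
      · exact h
      · exact H1 x hx
    · refine ⟨[], a :: t, by simp, by simp, ?_⟩
      intro x hx
      rcases List.mem_cons.mp hx with rfl | hx
      · exact h
      · exact le_of_lt (lt_of_le_of_lt h ((List.pairwise_cons.mp hp).1 x hx))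

theorem lower_aux : ∀ T m n, m + n = T → ∀ N : ℕ, ∃ cup : ℕ → ℕ → ℕ → Prop,
    (¬ ∃ l, IsCapIn (Finset.Ico N (N + Nat.choose (m + n) m)) cup l ∧ l.length = m + 2) ∧
    (¬ ∃ l, IsCupIn (Finset.Ico N (N + Nat.choose (m + n) m)) cup l ∧ l.length = n + 2) := by
  intro T
  induction T with
  | zero =>
    intro m n hmn N
    obtain ⟨rfl, rfl⟩ : m = 0 ∧ n = 0 := by omega
    exact singleton_case N _ 0 0 (by norm_num)
  | succ T IH =>
    intro m n hmn N
    rcases Nat.eq_zero_or_pos m with rfl | hm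
    · exact singleton_case N _ 0 n (by simp)
    rcases Nat.eq_zero_or_pos n with rfl | hn
    · exact singleton_case N _ m 0 (by simp)
    obtain ⟨m', rfl⟩ : ∃ m', m = m' + 1 := ⟨m - 1, by omega⟩
    obtain ⟨n', rfl⟩ : ∃ n', n = n' + 1 := ⟨n - 1, by omega⟩
    obtain ⟨cupL, hLcap, hLcup⟩ := IH m' (n' + 1) (by omega) N
    have e1 : m' + (n' + 1) = m' + n' + 1 := by omega
    rw [e1] at hLcap hLcup
    obtain ⟨cupR, hRcap, hRcup⟩ := IH (m' + 1) n' (by omega)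
      (N + Nat.choose (m' + n' + 1) m')
    have e2 : m' + 1 + n' = m' + n' + 1 := by omega
    rw [e2] at hRcap hRcup
    have e3 : m' + 1 + (n' + 1) = (m' + n' + 1) + 1 := by omega
    rw [e3, Nat.choose_succ_succ]
    simp only [Nat.succ_eq_add_one]
    set A := Nat.choose (m' + n' + 1) m' with hA
    set B := Nat.choose (m' + n' + 1) (m' + 1) with hB
    set M := N + A with hM
    -- now: L-config on Ico N (N + A), R-config on Ico M (M + B), S = Ico N (N + (A + B))
    refine ⟨fun x y z => if z < M then cupL x y z else if y < M then False
      else if x < M then True else cupR x y z, ?_, ?_⟩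
    · -- no (m'+1+2)-cap
      rintro ⟨l, hl, hlen⟩
      have hpw : l.Pairwise (· < ·) := List.isChain_iff_pairwise.mp hl.2.1
      obtain ⟨l₁, l₂, rfl, H1, H2⟩ := split_lt M l hpw
      have hlenl : l₁.length + l₂.length = m' + 3 := by
        simpa [List.length_append] using hlen
      have toL : ∀ l', l' ≠ [] → (l' <:+: l₁) →
          IsCapIn (Finset.Ico N (N + A)) cupL l' := by
        intro l' hne hinf
        have hinf2 : l' <:+: l₁ ++ l₂ := hinf.trans ⟨[], l₂, by simp⟩
        have hcap' := isCapIn_infix hl hne hinf2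
        refine ⟨hne, hcap'.2.1, ?_, ?_⟩
        · intro x hx
          have hx1 : x ∈ l₁ := hinf.sublist.subset hx
          have hxI := Finset.mem_Ico.mp (hcap'.2.2.1 x hx)
          exact Finset.mem_Ico.mpr ⟨hxI.1, H1 x hx1⟩
        · have htr := hcap'.2.2.2
          rw [triples_iff] at htr ⊢
          intro u x y z v heq
          have hzl : z ∈ l₁ := hinf.sublist.subset (by rw [heq]; simp)
          have hz : z < M := H1 z hzl
          have hcu := htr u x y z v heq
          simp only [hz, if_true, if_pos] at hcu
          exact hcu
      have toR : ∀ l', l' ≠ [] → (l' <:+: l₂) →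
          IsCapIn (Finset.Ico M (M + B)) cupR l' := by
        intro l' hne hinf
        have hinf2 : l' <:+: l₁ ++ l₂ := hinf.trans ⟨l₁, [], by simp⟩
        have hcap' := isCapIn_infix hl hne hinf2
        refine ⟨hne, hcap'.2.1, ?_, ?_⟩
        · intro x hx
          have hx2 : x ∈ l₂ := hinf.sublist.subset hx
          have hxI := Finset.mem_Ico.mp (hcap'.2.2.1 x hx)
          refine Finset.mem_Ico.mpr ⟨H2 x hx2, by omega⟩
        · have htr := hcap'.2.2.2
          rw [triples_iff] at htr ⊢
          intro u x y z v heq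
          have hxm : ¬ x < M := not_lt.mpr (H2 x (hinf.sublist.subset (by rw [heq]; simp)))
          have hym : ¬ y < M := not_lt.mpr (H2 y (hinf.sublist.subset (by rw [heq]; simp)))
          have hzm : ¬ z < M := not_lt.mpr (H2 z (hinf.sublist.subset (by rw [heq]; simp)))
          have hcu := htr u x y z v heq
          simp only [hxm, hym, hzm, if_false] at hcu
          exact hcu
      rcases l₂ with _ | ⟨r1, l₂t⟩
      · -- all in L; take m'+2
        have hl1 : l₁.length = m' + 3 := by simpa using hlenl
        have hne : l₁.take (m' + 2) ≠ [] := by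
          have : (l₁.take (m' + 2)).length = m' + 2 := by
            rw [List.length_take]; omega
          intro hcon; rw [hcon] at this; simp at this
        refine hLcap ⟨l₁.take (m' + 2), toL _ hne (List.take_prefix _ _).isInfix, ?_⟩
        rw [List.length_take]; omega
      rcases l₂t with _ | ⟨r2, l₂t⟩
      · -- exactly one point on the right; l₁ is an (m'+2)-cap in L
        have hne : l₁ ≠ [] := by
          intro hcon; rw [hcon] at hlenl
          simp only [List.length_nil, List.length_cons] at hlenl
          omega
        refine hLcap ⟨l₁, toL _ hne (List.infix_refl _), ?_⟩
        simp only [List.length_cons, List.length_nil] at hlenl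
        omega
      · rcases List.eq_nil_or_concat l₁ with rfl | ⟨u, x1, rfl⟩
        · -- all in R
          refine hRcap ⟨r1 :: r2 :: l₂t, toR _ (by simp) (List.infix_refl _), ?_⟩
          simp only [List.length_cons, List.length_nil, List.length_append] at hlenl ⊢
          omega
        · -- mixed: triple (x1, r1, r2) must be a cap but is colored cup
          have hcu := (triples_iff _ _).mp hl.2.2.2 u x1 r1 r2 l₂t
            (by simp [List.concat_eq_append])
          have h1 : ¬ r2 < M := not_lt.mpr (H2 r2 (by simp))
          have h2 : ¬ r1 < M := not_lt.mpr (H2 r1 (by simp))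
          have h3 : x1 < M := H1 x1 (by simp)
          simp [h1, h2, h3] at hcu
    · -- no (n'+1+2)-cup
      rintro ⟨l, hl, hlen⟩
      have hpw : l.Pairwise (· < ·) := List.isChain_iff_pairwise.mp hl.2.1
      obtain ⟨l₁, l₂, rfl, H1, H2⟩ := split_lt M l hpw
      have hlenl : l₁.length + l₂.length = n' + 3 := by
        simpa [List.length_append] using hlen
      have toL : ∀ l', l' ≠ [] → (l' <:+: l₁) →
          IsCupIn (Finset.Ico N (N + A)) cupL l' := by
        intro l' hne hinf
        have hinf2 : l' <:+: l₁ ++ l₂ := hinf.trans ⟨[], l₂, by simp⟩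
        have hcup' := isCupIn_infix hl hne hinf2
        refine ⟨hne, hcup'.2.1, ?_, ?_⟩
        · intro x hx
          have hx1 : x ∈ l₁ := hinf.sublist.subset hx
          have hxI := Finset.mem_Ico.mp (hcup'.2.2.1 x hx)
          exact Finset.mem_Ico.mpr ⟨hxI.1, H1 x hx1⟩
        · have htr := hcup'.2.2.2
          rw [triples_iff] at htr ⊢
          intro u x y z v heq
          have hz : z < M := H1 z (hinf.sublist.subset (by rw [heq]; simp))
          have hcu := htr u x y z v heq
          simpa [hz] using hcu
      have toR : ∀ l', l' ≠ [] → (l' <:+: l₂) →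
          IsCupIn (Finset.Ico M (M + B)) cupR l' := by
        intro l' hne hinf
        have hinf2 : l' <:+: l₁ ++ l₂ := hinf.trans ⟨l₁, [], by simp⟩
        have hcup' := isCupIn_infix hl hne hinf2
        refine ⟨hne, hcup'.2.1, ?_, ?_⟩
        · intro x hx
          have hx2 : x ∈ l₂ := hinf.sublist.subset hx
          have hxI := Finset.mem_Ico.mp (hcup'.2.2.1 x hx)
          refine Finset.mem_Ico.mpr ⟨H2 x hx2, by omega⟩
        · have htr := hcup'.2.2.2
          rw [triples_iff] at htr ⊢
          intro u x y z v heq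
          have hxm : ¬ x < M := not_lt.mpr (H2 x (hinf.sublist.subset (by rw [heq]; simp)))
          have hym : ¬ y < M := not_lt.mpr (H2 y (hinf.sublist.subset (by rw [heq]; simp)))
          have hzm : ¬ z < M := not_lt.mpr (H2 z (hinf.sublist.subset (by rw [heq]; simp)))
          have hcu := htr u x y z v heq
          simpa [hxm, hym, hzm] using hcu
      rcases l₂ with _ | ⟨r1, l₂t⟩
      · -- all in L: an (n'+3)-cup in L, contradiction
        have hne : l₁ ≠ [] := by
          intro hcon; rw [hcon] at hlenl; simp at hlenl
        refine hLcup ⟨l₁, toL _ hne (List.infix_refl _), ?_⟩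
        simp only [List.length_nil] at hlenl
        omega
      by_cases h12 : l₁.length ≤ 1
      · -- right part has ≥ n'+2 points: take n'+2 of l₂
        have hlen2 : n' + 2 ≤ (r1 :: l₂t).length := by
          simp only [List.length_cons] at hlenl ⊢
          omega
        have hne : (r1 :: l₂t).take (n' + 2) ≠ [] := by
          have : ((r1 :: l₂t).take (n' + 2)).length = n' + 2 := by
            rw [List.length_take]; omega
          intro hcon; rw [hcon] at this; simp at this
        refine hRcup ⟨(r1 :: l₂t).take (n' + 2), toR _ hne (List.take_prefix _ _).isInfix, ?_⟩
        rw [List.length_take]; omega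
      · -- l₁ has ≥ 2 points: triple (x1, x2, r1) must be a cup but is colored cap
        obtain ⟨u, x1, x2, rfl⟩ := exists_last_two (l := l₁) (by omega)
        have hcu := (triples_iff _ _).mp hl.2.2.2 u x1 x2 r1 l₂t (by simp)
        have h1 : ¬ r1 < M := not_lt.mpr (H2 r1 (by simp))
        have h2 : x2 < M := H1 x2 (by simp)
        simp [h1, h2] at hcu

theorem stmt2 (a b : ℕ) (ha : 2 ≤ a) (hb : 2 ≤ b) :
    (∃ (S : Finset ℕ) (cup : ℕ → ℕ → ℕ → Prop),
      S.card = Nat.choose (a + b - 4) (a - 2) ∧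
      (¬ ∃ l : List ℕ, IsCapIn S cup l ∧ l.length = a) ∧
      (¬ ∃ l : List ℕ, IsCupIn S cup l ∧ l.length = b)) ∧
    (∀ (β : Type) [LinearOrder β], ∀ (S : Finset β) (cup : β → β → β → Prop),
      (¬ ∃ l : List β, IsCapIn S cup l ∧ l.length = a) →
      (¬ ∃ l : List β, IsCupIn S cup l ∧ l.length = b) →
      S.card ≤ Nat.choose (a + b - 4) (a - 2)) := by
  constructor
  · obtain ⟨cup, hcap, hcup⟩ := lower_aux ((a - 2) + (b - 2)) (a - 2) (b - 2) rfl 0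
    have e : (a - 2) + (b - 2) = a + b - 4 := by omega
    have ea : (a - 2) + 2 = a := by omega
    have eb : (b - 2) + 2 = b := by omega
    rw [e, ea] at hcap
    rw [e, eb] at hcup
    refine ⟨Finset.Ico 0 (0 + Nat.choose (a + b - 4) (a - 2)), cup, ?_, hcap, hcup⟩
    simp [Nat.card_Ico]
  · intro β _ S cup h1 h2
    exact upper_aux (a + b) a b le_rfl ha hb S cup h1 h2
end

section
/- Every a-cap-free configuration S admits a slope labeling: an assignment s of labels in {1,...,a-2} to all edges (pairs x < y) such that for any x < y < z, s(xy) ≤ s(yz) implies xyz is a cup. Specifically, setting s(e) = c(e) - 1, where c(e) is the maximum size of a cap starting with the edge e, gives such a labeling. -/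
variable {α : Type*} [LinearOrder α]

private lemma take2_eq {l : List α} {x y : α} (h : l.take 2 = [x, y]) :
    ∃ t, l = x :: y :: t := by
  match l with
  | [] => simp at h
  | [u] => simp at h
  | u :: v :: t =>
    simp [List.take] at h
    exact ⟨t, by simp [h.1, h.2]⟩

theorem stmt3 (a : ℕ) (ha : 2 ≤ a) (S : Finset α) (cup : α → α → α → Prop)
    (hfree : CapFree S cup a) :
    IsSlopeLabeling S cup a
      (fun x y =>
        sSup {k | ∃ l : List α, IsCapIn S cup l ∧ l.length = k ∧ l.take 2 = [x, y]} - 1) ∧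
    ∃ s : α → α → ℕ, IsSlopeLabeling S cup a s := by
  set T : α → α → Set ℕ := fun x y =>
    {k | ∃ l : List α, IsCapIn S cup l ∧ l.length = k ∧ l.take 2 = [x, y]} with hT
  have hbdd : ∀ x y, BddAbove (T x y) := by
    intro x y
    refine ⟨a, fun k hk => ?_⟩
    obtain ⟨l, hl, hlen, _⟩ := hk
    have := hfree l hl
    omega
  have hub : ∀ x y k, k ∈ T x y → k ≤ a - 1 := by
    intro x y k hk
    obtain ⟨l, hl, hlen, _⟩ := hk
    have := hfree l hl
    omega
  have hmem2 : ∀ x ∈ S, ∀ y ∈ S, x < y → 2 ∈ T x y := by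
    intro x hx y hy hxy
    refine ⟨[x, y], ⟨by simp, List.isChain_pair.2 hxy, ?_, trivial⟩, by simp, by simp⟩
    intro z hz; simp at hz; rcases hz with rfl | rfl <;> assumption
  have hsup_mem : ∀ x ∈ S, ∀ y ∈ S, x < y → sSup (T x y) ∈ T x y := by
    intro x hx y hy hxy
    exact Nat.sSup_mem ⟨2, hmem2 x hx y hy hxy⟩ (hbdd x y)
  have hsup_ge : ∀ x ∈ S, ∀ y ∈ S, x < y → 2 ≤ sSup (T x y) := by
    intro x hx y hy hxy
    exact le_csSup (hbdd x y) (hmem2 x hx y hy hxy)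
  have hsup_le : ∀ x y, sSup (T x y) ≤ a - 1 := by
    intro x y
    rcases (T x y).eq_empty_or_nonempty with h | h
    · simp [h]
    · exact csSup_le h (hub x y)
  have key : IsSlopeLabeling S cup a (fun x y => sSup (T x y) - 1) := by
    constructor
    · intro x hx y hy hxy
      have h1 := hsup_ge x hx y hy hxy
      have h2 := hsup_le x y
      show 1 ≤ sSup (T x y) - 1 ∧ sSup (T x y) - 1 ≤ a - 2
      omega
    · intro x hx y hy z hz hxy hyz hle
      replace hle : sSup (T x y) - 1 ≤ sSup (T y z) - 1 := hle
      by_contra hcup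
      -- max cap starting with [y, z]
      obtain ⟨l, hl, hlen, htake⟩ := hsup_mem y hy z hz hyz
      obtain ⟨t, rfl⟩ := take2_eq htake
      -- x :: l is a cap starting with [x, y]
      have hcap : IsCapIn S cup (x :: y :: z :: t) := by
        obtain ⟨_, hchain, hmem, htrip⟩ := hl
        refine ⟨by simp, ?_, ?_, ⟨hcup, htrip⟩⟩
        · exact List.isChain_cons_cons.2 ⟨hxy, hchain⟩
        · intro w hw
          rcases List.mem_cons.1 hw with rfl | hw
          · exact hx
          · exact hmem w hw
      have hmem' : (y :: z :: t).length + 1 ∈ T x y :=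
        ⟨x :: y :: z :: t, hcap, by simp, by simp⟩
      have h1 : (y :: z :: t).length + 1 ≤ sSup (T x y) := le_csSup (hbdd x y) hmem'
      have h2 := hsup_ge y hy z hz hyz
      omega
  exact ⟨key, ⟨_, key⟩⟩
end

section
/- Let S be an a-cap-free and b-cup-free configuration with a slope labeling s. Define α_i(p) as the maximum length of a cup ending at p whose last edge has label ≤ i (and α_i(p) = 1 if no such cup exists). Then for every p, 1 ≤ α_1(p) ≤ α_2(p) ≤ ... ≤ α_{a-2}(p) ≤ b-1, and for any x < y with s(xy) = i we have α_i(x) < α_i(y). Consequently the map p ↦ (α_1(p),...,α_{a-2}(p)) is injective. -/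
variable {α : Type*} [LinearOrder α]

set_option linter.unusedSectionVars false

lemma triples_concat_s4 {f : α → α → α → Prop} {y : α} :
    ∀ (l : List α) (w x : α), (l.dropLast).getLast? = some w → l.getLast? = some x →
      Triples f l → f w x y → Triples f (l ++ [y])
  | [], w, x => by simp
  | [a], w, x => by simp
  | [a, c], w, x => by
    intro h1 h2 _ h4
    simp at h1 h2
    subst h1; subst h2
    exact ⟨h4, trivial⟩
  | a :: c :: d :: t, w, x => by
    intro h1 h2 h3 h4
    refine ⟨h3.1, triples_concat_s4 (c :: d :: t) w x ?_ ?_ h3.2 h4⟩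
    · simpa using h1
    · simpa using h2

lemma mem_of_getLast?_eq {l : List α} {w : α} (hw : l.getLast? = some w) : w ∈ l := by
  obtain ⟨h, rfl⟩ := List.mem_getLast?_eq_getLast (Option.mem_def.mpr hw)
  exact List.getLast_mem h

lemma chain_last {l : List α} {w x : α} (hc : l.Chain' (· < ·))
    (hw : l.dropLast.getLast? = some w) (hx : l.getLast? = some x) : w < x := by
  have hne : l ≠ [] := by rintro rfl; simp at hx
  have hxl : l.getLast hne = x := by
    rw [List.getLast?_eq_getLast hne] at hx; exact Option.some_inj.mp hx
  have heq : l.dropLast ++ [x] = l := by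
    rw [← hxl]; exact List.dropLast_append_getLast hne
  rw [← heq] at hc; have hc : List.IsChain (· < ·) (l.dropLast ++ [x]) := hc; rw [List.isChain_append] at hc
  exact hc.2.2 w hw x rfl

lemma two_le_of_dropLast {l : List α} {w : α} (hw : l.dropLast.getLast? = some w) :
    2 ≤ l.length := by
  have h1 : l.dropLast ≠ [] := by rintro h; rw [h] at hw; simp at hw
  have := List.length_pos_iff.mpr h1
  rw [List.length_dropLast] at this
  omega

/-- The set whose sup defines `alphaStat`. -/
def aSet (S : Finset α) (cup : α → α → α → Prop) (s : α → α → ℕ) (i : ℕ) (p : α) : Set ℕ :=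
  {k | ∃ (l : List α) (x : α), IsCupIn S cup l ∧ EndsAt l p ∧
    l.length = k ∧ l.dropLast.getLast? = some x ∧ s x p ≤ i}

lemma alphaStat_eq (S : Finset α) (cup : α → α → α → Prop) (s : α → α → ℕ) (i : ℕ) (p : α) :
    alphaStat S cup s i p = max 1 (sSup (aSet S cup s i p)) := rfl

lemma aSet_bdd {S : Finset α} {cup : α → α → α → Prop} {b : ℕ} (hcup : CupFree S cup b)
    (s : α → α → ℕ) (i : ℕ) (p : α) : BddAbove (aSet S cup s i p) := by
  refine ⟨b, fun k hk => ?_⟩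
  obtain ⟨l, x, hl, -, rfl, -, -⟩ := hk
  exact (hcup l hl).le

lemma aSet_lt {S : Finset α} {cup : α → α → α → Prop} {b : ℕ} (hcup : CupFree S cup b)
    {s : α → α → ℕ} {i : ℕ} {p : α} {k : ℕ} (hk : k ∈ aSet S cup s i p) : k < b := by
  obtain ⟨l, x, hl, -, rfl, -, -⟩ := hk
  exact hcup l hl

lemma key_lt {a b : ℕ} {S : Finset α} {cup : α → α → α → Prop}
    (hcup : CupFree S cup b) {s : α → α → ℕ} (hs : IsSlopeLabeling S cup a s)
    {x y : α} (hx : x ∈ S) (hy : y ∈ S) (hxy : x < y) :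
    alphaStat S cup s (s x y) x < alphaStat S cup s (s x y) y := by
  have hbddy := aSet_bdd hcup s (s x y) y
  have hbddx := aSet_bdd hcup s (s x y) x
  have hxyS : IsCupIn S cup [x, y] := by
    refine ⟨by simp, List.isChain_pair.mpr hxy, ?_, trivial⟩
    intro z hz
    rcases List.mem_pair.mp hz with rfl | rfl <;> assumption
  have h2mem : (2 : ℕ) ∈ aSet S cup s (s x y) y :=
    ⟨[x, y], x, hxyS, by simp [EndsAt], by simp, by simp, le_refl _⟩
  rw [alphaStat_eq, alphaStat_eq]
  rcases Set.eq_empty_or_nonempty (aSet S cup s (s x y) x) with he | hne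
  · rw [he, csSup_empty, Nat.bot_eq_zero]
    have : (2 : ℕ) ≤ sSup (aSet S cup s (s x y) y) := le_csSup hbddy h2mem
    omega
  · have hkmem := Nat.sSup_mem hne hbddx
    set k := sSup (aSet S cup s (s x y) x) with hkdef
    obtain ⟨l, w, hl, hend, hlen, hdrop, hsw⟩ := hkmem
    have hk2 : 2 ≤ k := hlen ▸ two_le_of_dropLast hdrop
    have hwx : w < x := chain_last hl.2.1 hdrop hend
    have hwS : w ∈ S := hl.2.2.1 w ((List.dropLast_sublist l).subset (mem_of_getLast?_eq hdrop))
    have hcwxy : cup w x y := hs.2 w hwS x hx y hy hwx hxy hsw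
    have hl' : IsCupIn S cup (l ++ [y]) := by
      refine ⟨by simp, ?_, ?_, triples_concat_s4 l w x hdrop hend hl.2.2.2 hcwxy⟩
      · refine List.IsChain.append hl.2.1 (List.isChain_singleton y) ?_
        intro u hu v hv
        simp only [List.head?_cons, Option.mem_def, Option.some.injEq] at hv
        rw [Option.mem_def, hend] at hu
        rw [← hv, ← Option.some_inj.mp hu]
        exact hxy
      · intro z hz
        rcases List.mem_append.mp hz with h | h
        · exact hl.2.2.1 z h
        · rw [List.mem_singleton.mp h]; exact hy
    have hmem' : k + 1 ∈ aSet S cup s (s x y) y := by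
      refine ⟨l ++ [y], x, hl', ?_, by simp [hlen], ?_, le_refl _⟩
      · show (l ++ [y]).getLast? = some y
        exact List.getLast?_concat
      · rw [List.dropLast_concat]
        exact hend
    have : k + 1 ≤ sSup (aSet S cup s (s x y) y) := le_csSup hbddy hmem'
    omega

theorem stmt4 (a b : ℕ) (ha : 2 ≤ a) (hb : 2 ≤ b)
    (S : Finset α) (cup : α → α → α → Prop)
    (hcap : CapFree S cup a) (hcup : CupFree S cup b)
    (s : α → α → ℕ) (hs : IsSlopeLabeling S cup a s) :
    (∀ p ∈ S, 1 ≤ alphaStat S cup s 1 p ∧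
      (∀ i j : ℕ, i ≤ j → alphaStat S cup s i p ≤ alphaStat S cup s j p) ∧
      alphaStat S cup s (a - 2) p ≤ b - 1) ∧
    (∀ x ∈ S, ∀ y ∈ S, x < y →
      alphaStat S cup s (s x y) x < alphaStat S cup s (s x y) y) ∧
    Set.InjOn (fun p => fun i : Fin (a - 2) => alphaStat S cup s (i.1 + 1) p) S := by
  have habdd := fun i p => aSet_bdd hcup s i p
  refine ⟨?_, ?_, ?_⟩
  · intro p _
    refine ⟨le_max_left _ _, ?_, ?_⟩
    · intro i j hij
      rw [alphaStat_eq, alphaStat_eq]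
      refine max_le (le_max_left _ _) ?_
      rcases Set.eq_empty_or_nonempty (aSet S cup s i p) with he | hne
      · rw [he, csSup_empty]; exact bot_le
      · refine le_trans (csSup_le hne ?_) (le_max_right _ _)
        intro k hk
        obtain ⟨l, w, h1, h2, h3, h4, h5⟩ := hk
        exact le_csSup (habdd j p) ⟨l, w, h1, h2, h3, h4, h5.trans hij⟩
    · rw [alphaStat_eq]
      refine max_le (by omega) ?_
      rcases Set.eq_empty_or_nonempty (aSet S cup s (a - 2) p) with he | hne
      · rw [he, csSup_empty]; exact bot_le
      · refine csSup_le hne fun k hk => ?_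
        have := aSet_lt hcup hk
        omega
  · intro x hx y hy hxy
    exact key_lt hcup hs hx hy hxy
  · intro p hp q hq hpq
    by_contra hne
    rcases lt_or_gt_of_ne hne with h | h
    · obtain ⟨h1, h2⟩ := hs.1 p hp q hq h
      have hlt := key_lt hcup hs hp hq h
      have hidx : s p q - 1 < a - 2 := by omega
      have := congrFun hpq ⟨s p q - 1, hidx⟩
      simp only at this
      rw [Nat.sub_add_cancel h1] at this
      omega
    · obtain ⟨h1, h2⟩ := hs.1 q hq p hp h
      have hlt := key_lt hcup hs hq hp h
      have hidx : s q p - 1 < a - 2 := by omega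
      have := congrFun hpq ⟨s q p - 1, hidx⟩
      simp only at this
      rw [Nat.sub_add_cancel h1] at this
      omega
end

section
/- In a 4-cap-free configuration with a slope labeling s taking values in {1,2}: for any edge pq of label 1 and any cup C starting at q, the sequence pC is a cup; and for any edge pq of label 2 and any cup C ending at p, the sequence Cq is a cup. -/
variable {α : Type*} [LinearOrder α]

lemma cup_snoc_aux (S : Finset α) (cup : α → α → α → Prop) (p q : α)
    (hcup : ∀ x ∈ S, x < p → cup x p q) :
    ∀ C : List α, C.Chain' (· < ·) → (∀ x ∈ C, x ∈ S) → Triples cup C →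
      C.getLast? = some p → Triples cup (C ++ [q]) := by
  intro C
  induction C with
  | nil => simp
  | cons a t ih =>
    intro hch hmem htr hlast
    match t, htr with
    | [], _ =>
      trivial
    | [b], _ =>
      have hb : b = p := by simpa [List.getLast?] using hlast
      subst hb
      exact ⟨hcup a (hmem a (by simp)) (List.isChain_cons_cons.mp hch).1, trivial⟩
    | b :: c :: t', ⟨h1, h2⟩ =>
      refine ⟨h1, ?_⟩
      exact ih (List.isChain_cons_cons.mp hch).2 (fun x hx => hmem x (by simp [hx]))
        h2 (by simpa [List.getLast?_cons_cons] using hlast)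

theorem stmt7 (S : Finset α) (cup : α → α → α → Prop) (s : α → α → ℕ)
    (hfree : CapFree S cup 4) (hs : IsSlopeLabeling S cup 4 s) :
    (∀ p ∈ S, ∀ q ∈ S, p < q → s p q = 1 →
      ∀ C : List α, IsCupIn S cup C → StartsAt C q → IsCupIn S cup (p :: C)) ∧
    (∀ p ∈ S, ∀ q ∈ S, p < q → s p q = 2 →
      ∀ C : List α, IsCupIn S cup C → EndsAt C p → IsCupIn S cup (C ++ [q])) := by
  obtain ⟨hbound, hslope⟩ := hs
  constructor
  · -- prepend with label 1 edge
    rintro p hp q hq hpq hs1 C ⟨hne, hch, hmem, htr⟩ hstart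
    refine ⟨by simp, ?_, ?_, ?_⟩
    · refine List.isChain_cons.mpr ⟨?_, hch⟩
      intro y hy
      have : y = q := by
        rw [StartsAt] at hstart
        rw [hstart] at hy
        exact (Option.mem_some_iff.mp hy).symm
      subst this; exact hpq
    · intro x hx
      rcases List.mem_cons.mp hx with h | h
      · subst h; exact hp
      · exact hmem x h
    · match C, htr, hstart with
      | [x], _, hst =>
        trivial
      | x :: y :: t, htr, hst =>
        have hx : x = q := by
          simpa [StartsAt] using hst
        subst hx
        have hqy : x < y := (List.isChain_cons_cons.mp hch).1
        refine ⟨?_, htr⟩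
        apply hslope p hp x hq y (hmem y (by simp)) hpq hqy
        rw [hs1]
        exact (hbound x hq y (hmem y (by simp)) hqy).1
  · -- append with label 2 edge
    rintro p hp q hq hpq hs2 C ⟨hne, hch, hmem, htr⟩ hend
    have hlast : C.getLast? = some p := hend
    refine ⟨by simp, ?_, ?_, ?_⟩
    · refine List.isChain_append.mpr ?_
      refine ⟨hch, List.isChain_singleton q, ?_⟩
      intro x hx y hy
      have hx' : p = x := by rw [hlast] at hx; exact Option.mem_some_iff.mp hx
      have hy' : q = y := by simpa using hy
      rw [← hx', ← hy']; exact hpq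
    · intro x hx
      rcases List.mem_append.mp hx with h | h
      · exact hmem x h
      · simp at h; subst h; exact hq
    · refine cup_snoc_aux S cup p q ?_ C hch hmem htr hlast
      intro x hx hxp
      apply hslope x hx p hp q hq hxp hpq
      rw [hs2]
      exact (hbound x hx p hp hxp).2
end

section
/- Let n ≥ 3 and let S be a 4-cap-free, n-cup-free configuration. If the ending point x of an (n-1)-cup C_1 is also the starting point of another (n-1)-cup C_2, then S contains a weak (3, n-1)-gon, i.e., a 3-cap and an (n-1)-cup sharing the same two endpoints. -/
variable {α : Type*} [LinearOrder α]

omit [LinearOrder α] in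
lemma triples_append1 {f : α → α → α → Prop} :
    ∀ (l : List α) {a b c : α}, Triples f (l ++ [a, b]) → f a b c →
      Triples f (l ++ [a, b, c]) := by
  intro l
  induction l with
  | nil => intro a b c h1 h2; exact ⟨h2, trivial⟩
  | cons d l ih =>
    intro a b c h1 h2
    cases l with
    | nil => exact ⟨h1.1, h2, trivial⟩
    | cons e l' =>
      cases l' with
      | nil => exact ⟨h1.1, h1.2.1, h2, trivial⟩
      | cons g l'' => exact ⟨h1.1, ih h1.2 h2⟩

omit [LinearOrder α] in
lemma triples_dropLast {f : α → α → α → Prop} :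
    ∀ (l : List α) {c : α}, Triples f (l ++ [c]) → Triples f l := by
  intro l
  induction l with
  | nil => intro c _; trivial
  | cons d l ih =>
    intro c h1
    cases l with
    | nil => trivial
    | cons e l' =>
      cases l' with
      | nil => trivial
      | cons g l'' => exact ⟨h1.1, ih h1.2⟩

lemma head_lt_getLast {l : List α} {a b : α} (h : l.Chain' (· < ·))
    (ha : l.head? = some a) (hb : l.getLast? = some b) (hlen : 2 ≤ l.length) : a < b := by
  rcases l with _ | ⟨c, t⟩
  · simp at ha
  · have hac : c = a := by simpa using ha
    subst hac
    rcases t with _ | ⟨d, t'⟩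
    · simp at hlen
    · have hp := List.isChain_iff_pairwise.mp h
      have hb' : (d :: t').getLast? = some b := by
        rwa [List.getLast?_cons_cons] at hb
      have : b ∈ d :: t' := by
        rw [List.getLast?_eq_getLast (l := d :: t') (by simp)] at hb'
        have := List.getLast_mem (l := d :: t') (by simp)
        rwa [Option.some.inj hb'] at this
      exact List.rel_of_pairwise_cons hp this

omit [LinearOrder α] in
lemma mem_of_getLast?' {l : List α} {a : α} (h : l.getLast? = some a) : a ∈ l := by
  obtain ⟨ys, rfl⟩ := List.getLast?_eq_some_iff.mp h; simp

omit [LinearOrder α] in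
lemma mem_of_head?' {l : List α} {a : α} (h : l.head? = some a) : a ∈ l := by
  obtain ⟨ys, rfl⟩ := List.head?_eq_some_iff.mp h; simp

theorem stmt9 (n : ℕ) (hn : 3 ≤ n) (S : Finset α) (cup : α → α → α → Prop)
    (h4 : CapFree S cup 4) (hncf : CupFree S cup n)
    (C₁ C₂ : List α) (h1 : IsCupIn S cup C₁) (h2 : IsCupIn S cup C₂)
    (l1 : C₁.length = n - 1) (l2 : C₂.length = n - 1)
    (x : α) (hx1 : EndsAt C₁ x) (hx2 : StartsAt C₂ x) :
    HasWeakGon S cup 3 (n - 1) := by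
  obtain ⟨hne1, hch1, hmem1, htr1⟩ := h1
  obtain ⟨hne2, hch2, hmem2, htr2⟩ := h2
  simp only [EndsAt, StartsAt] at hx1 hx2
  -- decompose C₂ = x :: z :: M
  obtain ⟨T, rfl⟩ := List.head?_eq_some_iff.mp hx2
  rcases T with _ | ⟨z, M⟩
  · simp at l2; omega
  -- decompose C₁ = E ++ [p, x]
  obtain ⟨D, rfl⟩ := List.getLast?_eq_some_iff.mp hx1
  have hD : D ≠ [] := by rintro rfl; simp at l1; omega
  obtain ⟨p, hp⟩ : ∃ p, D.getLast? = some p := ⟨D.getLast hD, List.getLast?_eq_getLast hD⟩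
  obtain ⟨E, rfl⟩ := List.getLast?_eq_some_iff.mp hp
  simp only [List.append_assoc, List.cons_append, List.nil_append] at htr1 hch1 hmem1 l1
  simp only [List.length_append, List.length_cons, List.length_nil] at l1 l2
  -- basic facts
  have hpx : p < x := by
    have := (List.isChain_append.mp
      (by simpa only [List.append_assoc, List.cons_append, List.nil_append] using
        (hch1 : (E ++ [p, x]).Chain' (· < ·)) : ((E ++ [p]) ++ [x]).Chain' (· < ·))).2.2
    exact this p (by simp) x rfl
  have hxz : x < z := (List.isChain_cons_cons.mp hch2).1
  have hmemx : x ∈ S := hmem2 x (by simp)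
  have hmemp : p ∈ S := hmem1 p (by simp)
  have hmemz : z ∈ S := hmem2 z (by simp)
  obtain ⟨q, hq⟩ : ∃ q, (x :: z :: M).getLast? = some q :=
    ⟨_, List.getLast?_eq_getLast (by simp)⟩
  have hq' : (z :: M).getLast? = some q := by rwa [List.getLast?_cons_cons] at hq
  have hmemq : q ∈ S := hmem2 q (mem_of_getLast?' hq)
  have hxq : x < q := head_lt_getLast hch2 rfl hq (by simp)
  by_cases hA : Triples cup (p :: z :: M)
  · -- Case A: weak gon with cap [p, x, q] and cup p :: z :: M
    have hK1 : ¬ cup p x q := by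
      intro hcup
      have hV : IsCupIn S cup (E ++ [p, x, q]) := by
        refine ⟨by simp, ?_, ?_, ?_⟩
        · rw [show E ++ [p, x, q] = (E ++ [p, x]) ++ [q] by simp]
          refine List.isChain_append.mpr ⟨hch1, List.isChain_singleton q, ?_⟩
          simpa using hxq
        · intro y hy
          simp only [List.mem_append, List.mem_cons, List.not_mem_nil, or_false] at hy
          rcases hy with hy | rfl | rfl | rfl
          · exact hmem1 y (by simp [hy])
          · exact hmemp
          · exact hmemx
          · exact hmemq
        · exact triples_append1 E htr1 hcup
      have := hncf _ hV
      simp only [List.length_append, List.length_cons, List.length_nil] at this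
      omega
    refine ⟨[p, x, q], p :: z :: M, p, q, ?_, rfl, ?_, ?_, rfl, rfl, by simp [EndsAt], ?_⟩
    · exact ⟨by simp, by simp [List.Chain', List.isChain_cons_cons, hpx, hxq], by
        intro y hy
        simp only [List.mem_cons, List.not_mem_nil, or_false] at hy
        rcases hy with rfl | rfl | rfl
        exacts [hmemp, hmemx, hmemq], ⟨hK1, trivial⟩⟩
    · refine ⟨by simp, ?_, ?_, hA⟩
      · exact List.isChain_cons_cons.mpr ⟨lt_trans hpx hxz, (List.isChain_cons_cons.mp hch2).2⟩
      · intro y hy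
        rcases List.mem_cons.mp hy with rfl | hy
        · exact hmemp
        · exact hmem2 y (List.mem_cons_of_mem _ hy)
    · simp only [List.length_cons]; omega
    · rw [EndsAt, List.getLast?_cons_cons]; exact hq'
  · -- Case B
    rcases M with _ | ⟨z', M'⟩
    · exact absurd trivial hA
    have hB : ¬ cup p z z' := fun h => hA ⟨h, htr2.2⟩
    have hzz' : z < z' := (List.isChain_cons_cons.mp (List.isChain_cons_cons.mp hch2).2).1
    have hmemz' : z' ∈ S := hmem2 z' (by simp)
    have hE : E ≠ [] := by rintro rfl; simp at l1 l2; omega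
    obtain ⟨w, hw⟩ : ∃ w, E.getLast? = some w := ⟨E.getLast hE, List.getLast?_eq_getLast hE⟩
    obtain ⟨F, rfl⟩ := List.getLast?_eq_some_iff.mp hw
    simp only [List.append_assoc, List.cons_append, List.nil_append] at htr1 hch1 hmem1 l1
    simp only [List.length_append, List.length_cons, List.length_nil] at l1 l2
    have hmemw : w ∈ S := hmem1 w (by simp)
    have hwp : w < p := by
      have h' : ((F ++ [w]) ++ [p, x]).Chain' (· < ·) := by
        simpa only [List.append_assoc, List.cons_append, List.nil_append] using hch1
      have := (List.isChain_append.mp h').2.2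
      exact this w (by simp) p rfl
    have hpz : p < z := lt_trans hpx hxz
    have hwpz : cup w p z := by
      by_contra hc
      have hcap : IsCapIn S cup [w, p, z, z'] := by
        refine ⟨by simp, by simp [List.Chain', List.isChain_cons_cons, hwp, hpz, hzz'], ?_, ⟨hc, hB, trivial⟩⟩
        intro y hy
        simp only [List.mem_cons, List.not_mem_nil, or_false] at hy
        rcases hy with rfl | rfl | rfl | rfl
        exacts [hmemw, hmemp, hmemz, hmemz']
      have := h4 _ hcap
      simp at this
    obtain ⟨p₁, hp₁⟩ : ∃ p₁, (F ++ [w, p, x]).head? = some p₁ :=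
      ⟨(F ++ [w, p, x]).head (by simp), List.head?_eq_head _⟩
    have hp₁mem : p₁ ∈ S := hmem1 p₁ (mem_of_head?' hp₁)
    have hp₁x : p₁ < x := head_lt_getLast hch1 hp₁ (by simp) (by simp)
    have hK2 : ¬ cup p₁ x z := by
      intro hcup
      have hV : IsCupIn S cup (p₁ :: x :: z :: z' :: M') := by
        refine ⟨by simp, List.isChain_cons_cons.mpr ⟨hp₁x, hch2⟩, ?_, ⟨hcup, htr2⟩⟩
        intro y hy
        rcases List.mem_cons.mp hy with rfl | hy
        · exact hp₁mem
        · exact hmem2 y hy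
      have := hncf _ hV
      simp only [List.length_cons] at this
      omega
    have htrU : Triples cup (F ++ [w, p, z]) := by
      refine triples_append1 F ?_ hwpz
      have : Triples cup ((F ++ [w, p]) ++ [x]) := by
        simpa only [List.append_assoc, List.cons_append, List.nil_append] using htr1
      simpa only [List.append_assoc, List.cons_append, List.nil_append] using
        triples_dropLast _ this
    have hchU : (F ++ [w, p, z]).Chain' (· < ·) := by
      have h' : ((F ++ [w, p]) ++ [x]).Chain' (· < ·) := by
        simpa only [List.append_assoc, List.cons_append, List.nil_append] using hch1
      have hpre := (List.isChain_append.mp h').1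
      have : ((F ++ [w, p]) ++ [z]).Chain' (· < ·) := by
        refine List.isChain_append.mpr ⟨hpre, List.isChain_singleton z, ?_⟩
        simpa using hpz
      simpa only [List.append_assoc, List.cons_append, List.nil_append] using this
    have hheadU : (F ++ [w, p, z]).head? = some p₁ := by
      rw [List.head?_append] at hp₁ ⊢
      exact hp₁
    refine ⟨[p₁, x, z], F ++ [w, p, z], p₁, z, ?_, rfl, ?_, ?_, rfl, hheadU, by simp [EndsAt], by simp [EndsAt]⟩
    · refine ⟨by simp, by simp [List.Chain', List.isChain_cons_cons, hp₁x, hxz], ?_, ⟨hK2, trivial⟩⟩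
      intro y hy
      simp only [List.mem_cons, List.not_mem_nil, or_false] at hy
      rcases hy with rfl | rfl | rfl
      exacts [hp₁mem, hmemx, hmemz]
    · refine ⟨by simp, hchU, ?_, htrU⟩
      intro y hy
      simp only [List.mem_append, List.mem_cons, List.not_mem_nil, or_false] at hy
      rcases hy with hy | rfl | rfl | rfl
      · exact hmem1 y (by simp [hy])
      · exact hmemw
      · exact hmemp
      · exact hmemz
    · simp only [List.length_append, List.length_cons, List.length_nil]; omega
end

section
/- Let n ≥ 3 and let S be a 4-cap-free, n-cup-free configuration. If S contains two interweaved laced (n-1)-cups, then S contains a weak (3, n-1)-gon. -/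
variable {α : Type*} [LinearOrder α]

set_option linter.unusedSectionVars false in
private lemma triples_mid {f : α → α → α → Prop} (x y : α) (l₂ : List α) :
    ∀ l₁ : List α, Triples f (l₁ ++ x :: y :: l₂) ↔ Triples f (l₁ ++ [x, y]) ∧ Triples f (x :: y :: l₂)
  | [] => by
      simp only [List.nil_append]
      exact ⟨fun h => ⟨trivial, h⟩, fun h => h.2⟩
  | [a] => by
      show f a x y ∧ Triples f (x :: y :: l₂) ↔ (f a x y ∧ Triples f [x, y]) ∧ Triples f (x :: y :: l₂)
      have : Triples f [x, y] := trivial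
      tauto
  | [a, b] => by
      show f a b x ∧ (f b x y ∧ Triples f (x :: y :: l₂)) ↔
        (f a b x ∧ (f b x y ∧ Triples f [x, y])) ∧ Triples f (x :: y :: l₂)
      have : Triples f [x, y] := trivial
      tauto
  | a :: b :: c :: l₁ => by
      have ih := triples_mid (f := f) x y l₂ (b :: c :: l₁)
      show f a b c ∧ Triples f ((b :: c :: l₁) ++ x :: y :: l₂) ↔
        (f a b c ∧ Triples f ((b :: c :: l₁) ++ [x, y])) ∧ Triples f (x :: y :: l₂)
      rw [ih]; tauto

private lemma chain'_concat {l : List α} {x y : α} (h : List.Chain' (· < ·) l)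
    (hl : l.getLast? = some x) (hxy : x < y) : List.Chain' (· < ·) (l ++ [y]) := by
  refine List.isChain_append.mpr ⟨h, List.isChain_singleton y, ?_⟩
  intro a ha b hb
  rw [Option.mem_def, hl] at ha
  rw [Option.mem_def] at hb
  simp only [List.head?_cons, Option.some.injEq] at hb
  obtain rfl : x = a := Option.some.inj ha
  obtain rfl : y = b := hb
  exact hxy

private lemma chain2 {a b : α} (h1 : a < b) : List.Chain' (· < ·) [a, b] :=
  List.isChain_cons_cons.mpr ⟨h1, List.isChain_singleton b⟩

private lemma chain3 {a b c : α} (h1 : a < b) (h2 : b < c) : List.Chain' (· < ·) [a, b, c] :=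
  List.isChain_cons_cons.mpr ⟨h1, chain2 h2⟩

private lemma decomp_last2 {l : List α} {p : α} (h : l.getLast? = some p) :
    l = [p] ∨ ∃ l₀ a, l = l₀ ++ [a, p] := by
  have h' : l.reverse.head? = some p := by rwa [List.head?_reverse]
  have hl : l = l.reverse.reverse := (List.reverse_reverse l).symm
  rcases hrev : l.reverse with _ | ⟨c, t⟩
  · rw [hrev] at h'; simp at h'
  · rw [hrev] at h'
    simp only [List.head?_cons, Option.some.injEq] at h'
    subst h'
    rcases t with _ | ⟨a, t'⟩
    · left; rw [hl, hrev]; simp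
    · right
      exact ⟨t'.reverse, a, by rw [hl, hrev]; simp⟩

private lemma decomp_last3 {l : List α} {r : α} (h : l.getLast? = some r) (hlen : 3 ≤ l.length) :
    ∃ E u t, l = E ++ [u, t, r] := by
  have h' : l.reverse.head? = some r := by rwa [List.head?_reverse]
  have hl : l = l.reverse.reverse := (List.reverse_reverse l).symm
  have hlen' : 3 ≤ l.reverse.length := by simpa using hlen
  rcases hrev : l.reverse with _ | ⟨c, t⟩
  · rw [hrev] at hlen'; simp at hlen'
  · rw [hrev] at h' hlen'
    simp only [List.head?_cons, Option.some.injEq] at h'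
    subst h'
    rcases t with _ | ⟨t₁, t₂⟩
    · simp at hlen'
    · rcases t₂ with _ | ⟨u₁, E⟩
      · simp at hlen'
      · exact ⟨E.reverse, u₁, t₁, by rw [hl, hrev]; simp⟩

private lemma no_ncup {S : Finset α} {cup : α → α → α → Prop} {n : ℕ}
    (hncf : CupFree S cup n) {L : List α} (hL : IsCupIn S cup L) (hlen : n ≤ L.length) :
    False := by
  have := hncf L hL; omega

private lemma no_cap4 {S : Finset α} {cup : α → α → α → Prop} (h4 : CapFree S cup 4)
    {a b c d : α} (ha : a ∈ S) (hb : b ∈ S) (hc : c ∈ S) (hd : d ∈ S)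
    (h1 : a < b) (h2 : b < c) (h3 : c < d)
    (hx : ¬ cup a b c) (hy : ¬ cup b c d) : False := by
  have : ([a, b, c, d] : List α).length < 4 := by
    refine h4 [a, b, c, d] ⟨by simp, List.isChain_cons_cons.mpr ⟨h1, chain3 h2 h3⟩, ?_, ⟨hx, hy, trivial⟩⟩
    intro z hz
    simp only [List.mem_cons, List.not_mem_nil, or_false] at hz
    rcases hz with rfl | rfl | rfl | rfl <;> assumption
  simp at this

private lemma mk_gon {S : Finset α} {cup : α → α → α → Prop} {x m y : α} {U : List α} {b : ℕ}
    (hx : x ∈ S) (hm : m ∈ S) (hy : y ∈ S) (hxm : x < m) (hmy : m < y)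
    (hnc : ¬ cup x m y) (hU : IsCupIn S cup U) (hlen : U.length = b)
    (hUs : StartsAt U x) (hUe : EndsAt U y) : HasWeakGon S cup 3 b := by
  refine ⟨[x, m, y], U, x, y, ⟨by simp, chain3 hxm hmy, ?_, ⟨hnc, trivial⟩⟩, rfl,
    hU, hlen, rfl, hUs, ?_, hUe⟩
  · intro z hz
    simp only [List.mem_cons, List.not_mem_nil, or_false] at hz
    rcases hz with rfl | rfl | rfl <;> assumption
  · show ([x, m, y] : List α).getLast? = some y
    simp

theorem stmt10 (n : ℕ) (hn : 3 ≤ n) (S : Finset α) (cup : α → α → α → Prop)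
    (h4 : CapFree S cup 4) (hncf : CupFree S cup n)
    (C₁ C₂ : List α) (h1 : IsLacedCup S cup n C₁) (h2 : IsLacedCup S cup n C₂)
    (hint : Interweaved C₁ C₂) :
    HasWeakGon S cup 3 (n - 1) := by
  classical
  obtain ⟨p, r, q, s, hC1s, hC1e, hC2s, hC2e, hpq, hqr, hrs⟩ := hint
  obtain ⟨hC1, hC1len, p₁, r₁, A, B, hA1, hA2, hAcup, hBcup, hAe, hBs, hABlen⟩ := h1
  obtain ⟨hC2, hC2len, q₁, s₁, A', B', hA1', hA2', hAcup', hBcup', hAe', hBs', hABlen'⟩ := h2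
  simp only [StartsAt, EndsAt] at hC1s hC1e hC2s hC2e hA1 hA2 hA1' hA2' hAe hBs hAe' hBs'
  obtain rfl : p = p₁ := Option.some.inj (hC1s.symm.trans hA1)
  obtain rfl : r = r₁ := Option.some.inj (hC1e.symm.trans hA2)
  obtain rfl : q = q₁ := Option.some.inj (hC2s.symm.trans hA1')
  obtain rfl : s = s₁ := Option.some.inj (hC2e.symm.trans hA2')
  have hmem1 := hC1.2.2.1
  have hmem2 := hC2.2.2.1
  have hpS : p ∈ S := hmem1 p (List.mem_of_mem_head? hC1s)
  have hrS : r ∈ S := hmem1 r (List.mem_of_mem_getLast? hC1e)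
  have hqS : q ∈ S := hmem2 q (List.mem_of_mem_head? hC2s)
  have hsS : s ∈ S := hmem2 s (List.mem_of_mem_getLast? hC2e)
  have hqs : q < s := lt_of_le_of_lt hqr hrs
  rcases Nat.lt_or_ge n 4 with hn4 | hn4
  · -- n = 3
    have hps : p < s := hpq.trans hqs
    refine mk_gon hpS hqS hsS hpq hqs ?_ ⟨by simp, chain2 hps, ?_, trivial⟩ (by simp; omega)
      rfl (by show ([p, s] : List α).getLast? = some s; simp)
    · intro hcup
      refine no_ncup hncf (L := [p, q, s]) ⟨by simp, chain3 hpq hqs, ?_, ⟨hcup, trivial⟩⟩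
        (by simp; omega)
      intro z hz
      simp only [List.mem_cons, List.not_mem_nil, or_false] at hz
      rcases hz with rfl | rfl | rfl <;> assumption
    · intro z hz
      simp only [List.mem_cons, List.not_mem_nil, or_false] at hz
      rcases hz with rfl | rfl <;> assumption
  · -- n ≥ 4
    obtain ⟨y₂, y₃, T, rfl⟩ : ∃ y₂ y₃ T, C₂ = q :: y₂ :: y₃ :: T := by
      rcases C₂ with _ | ⟨c0, _ | ⟨c1, _ | ⟨c2, T⟩⟩⟩
      · simp at hC2s
      · exfalso; simp only [List.length_cons, List.length_nil] at hC2len; omega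
      · exfalso; simp only [List.length_cons, List.length_nil] at hC2len; omega
      · obtain rfl : c0 = q := Option.some.inj hC2s
        exact ⟨c1, c2, T, rfl⟩
    have hTlen : T.length + 3 = n - 1 := by simpa using hC2len
    have hchain2 := hC2.2.1
    have htrip2 := hC2.2.2.2
    have hqy₂ : q < y₂ := (List.isChain_cons_cons.mp hchain2).1
    have hy₂y₃ : y₂ < y₃ := (List.isChain_cons_cons.mp (List.isChain_cons_cons.mp hchain2).2).1
    have hy₂S : y₂ ∈ S := hmem2 y₂ (by simp)
    have hy₃S : y₃ ∈ S := hmem2 y₃ (by simp)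
    obtain ⟨E, u, t, rfl⟩ : ∃ E u t, C₁ = E ++ [u, t, r] :=
      decomp_last3 hC1e (by rw [hC1len]; omega)
    have hElen : E.length + 3 = n - 1 := by simpa using hC1len
    have hchain1 := hC1.2.1
    have htrip1 := hC1.2.2.2
    have hchutr : List.Chain' (· < ·) [u, t, r] := (List.isChain_append.mp hchain1).2.1
    have hut : u < t := (List.isChain_cons_cons.mp hchutr).1
    have htr : t < r := (List.isChain_cons_cons.mp (List.isChain_cons_cons.mp hchutr).2).1
    have huS : u ∈ S := hmem1 u (by simp)
    have htS : t ∈ S := hmem1 t (by simp)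
    have hmid1 := (triples_mid (f := cup) u t [r] E).mp htrip1
    have hTrEut := hmid1.1
    have hutr : cup u t r := hmid1.2.1
    have hF1 : ¬ cup p q y₂ := by
      intro hcup
      refine no_ncup hncf (L := p :: q :: y₂ :: y₃ :: T)
        ⟨by simp, List.isChain_cons_cons.mpr ⟨hpq, hchain2⟩, ?_, ⟨hcup, htrip2⟩⟩ ?_
      · intro z hz
        rcases List.mem_cons.mp hz with rfl | hz
        · exact hpS
        · exact hmem2 z hz
      · simp only [List.length_cons]; omega
    have hF2 : ¬ cup t r s := by
      intro hcup
      refine no_ncup hncf (L := E ++ [u, t, r, s]) ⟨by simp, ?_, ?_, ?_⟩ ?_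
      · have he : E ++ [u, t, r, s] = (E ++ [u, t, r]) ++ [s] := by simp
        rw [he]; exact chain'_concat hchain1 hC1e hrs
      · intro z hz
        simp only [List.mem_append, List.mem_cons, List.not_mem_nil, or_false] at hz
        rcases hz with hz | rfl | rfl | rfl | rfl
        · exact hmem1 z (by simp [hz])
        · exact huS
        · exact htS
        · exact hrS
        · exact hsS
      · exact (triples_mid (f := cup) u t [r, s] E).mpr ⟨hTrEut, hutr, hcup, trivial⟩
      · simp only [List.length_append, List.length_cons, List.length_nil]; omega
    obtain hqr' | hlt := hqr.eq_or_lt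
    · -- q = r
      subst hqr'
      by_cases h5 : cup u t y₂
      · -- gon with cap [p, q, y₂] and cup E ++ [u, t, y₂]
        have hchainEut : List.Chain' (· < ·) (E ++ [u, t]) := by
          have he : E ++ [u, t, q] = (E ++ [u, t]) ++ [q] := by simp
          rw [he] at hchain1
          exact (List.isChain_append.mp hchain1).1
        have hlastEut : (E ++ [u, t]).getLast? = some t := by
          have he : E ++ [u, t] = (E ++ [u]) ++ [t] := by simp
          rw [he]; exact List.getLast?_concat
        have hty₂ : t < y₂ := htr.trans hqy₂
        refine mk_gon (U := E ++ [u, t, y₂]) hpS hqS hy₂S hpq hqy₂ hF1 ⟨by simp, ?_, ?_, ?_⟩ ?_ ?_ ?_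
        · have he : E ++ [u, t, y₂] = (E ++ [u, t]) ++ [y₂] := by simp
          rw [he]; exact chain'_concat hchainEut hlastEut hty₂
        · intro z hz
          simp only [List.mem_append, List.mem_cons, List.not_mem_nil, or_false] at hz
          rcases hz with hz | rfl | rfl | rfl
          · exact hmem1 z (by simp [hz])
          · exact huS
          · exact htS
          · exact hy₂S
        · exact (triples_mid (f := cup) u t [y₂] E).mpr ⟨hTrEut, h5, trivial⟩
        · simp only [List.length_append, List.length_cons, List.length_nil]; omega
        · show (E ++ [u, t, y₂]).head? = some p
          rcases E with _ | ⟨e, E'⟩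
          · simp only [List.nil_append, List.head?_cons] at hC1s ⊢
            exact hC1s
          · simpa using hC1s
        · show (E ++ [u, t, y₂]).getLast? = some y₂
          have he : E ++ [u, t, y₂] = (E ++ [u, t]) ++ [y₂] := by simp
          rw [he]; exact List.getLast?_concat
      · by_cases h6 : cup t y₂ y₃
        · -- gon with cap [t, q, s] and cup t :: y₂ :: y₃ :: T
          refine mk_gon htS hqS hsS htr hqs hF2
            ⟨by simp, List.isChain_cons_cons.mpr ⟨htr.trans hqy₂, (List.isChain_cons_cons.mp hchain2).2⟩,
              ?_, ⟨h6, htrip2.2⟩⟩ ?_ rfl ?_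
          · intro z hz
            rcases List.mem_cons.mp hz with rfl | hz
            · exact htS
            · exact hmem2 z (by simp [hz])
          · simp only [List.length_cons]; omega
          · show (t :: y₂ :: y₃ :: T).getLast? = some s
            rw [List.getLast?_cons_cons]
            rw [List.getLast?_cons_cons] at hC2e
            exact hC2e
        · exact ((no_cap4 h4 huS htS hy₂S hy₃S hut (htr.trans hqy₂) hy₂y₃ h5 h6)).elim
    · -- q < r
      by_cases hpqr : cup p q r
      · by_cases hqrs : cup q r s
        · exfalso
          have hapq : ∀ a ∈ S, a < p → cup a p q := by
            intro a ha h
            by_contra hnc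
            exact no_cap4 h4 ha hpS hqS hy₂S h hpq hqy₂ hnc hF1
          have hrsw : ∀ w ∈ S, s < w → cup r s w := by
            intro w hw h
            by_contra hnc
            exact no_cap4 h4 htS hrS hsS hw htr hrs h hF2 hnc
          have hmemA := hAcup.2.2.1
          have hmemB := hBcup.2.2.1
          have hmemA' := hAcup'.2.2.1
          have hmemB' := hBcup'.2.2.1
          have hchA := hAcup.2.1
          have hchB := hBcup.2.1
          have hchA' := hAcup'.2.1
          have hchB' := hBcup'.2.1
          have hAtrip := hAcup.2.2.2
          have hBtrip := hBcup.2.2.2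
          have hA'trip := hAcup'.2.2.2
          have hB'trip := hBcup'.2.2.2
          obtain ⟨B₂, rfl⟩ : ∃ B₂, B = r :: B₂ := by
            rcases B with _ | ⟨b0, B₂⟩
            · simp at hBs
            · obtain rfl : b0 = r := Option.some.inj hBs
              exact ⟨B₂, rfl⟩
          obtain ⟨b, hbS, hrb, hK3⟩ : ∃ b, b ∈ S ∧ r < b ∧ ¬ cup q r b := by
            rcases B₂ with _ | ⟨b, B₀⟩
            · exfalso
              rcases decomp_last2 hAe with rfl | ⟨A₀, a, rfl⟩
              · simp only [List.length_cons, List.length_nil] at hABlen; omega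
              · have haS : a ∈ S := hmemA a (by simp)
                have hap : a < p :=
                  (List.isChain_cons_cons.mp (List.isChain_append.mp hchA).2.1).1
                refine no_ncup hncf (L := A₀ ++ [a, p, q, r]) ⟨by simp, ?_, ?_, ?_⟩ ?_
                · have h1 : List.Chain' (· < ·) ((A₀ ++ [a, p]) ++ [q]) :=
                    chain'_concat hchA hAe hpq
                  have h2 : List.Chain' (· < ·) (((A₀ ++ [a, p]) ++ [q]) ++ [r]) :=
                    chain'_concat h1 (List.getLast?_concat) hlt
                  have he : ((A₀ ++ [a, p]) ++ [q]) ++ [r] = A₀ ++ [a, p, q, r] := by simp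
                  rwa [he] at h2
                · intro z hz
                  simp only [List.mem_append, List.mem_cons, List.not_mem_nil, or_false] at hz
                  rcases hz with hz | rfl | rfl | rfl | rfl
                  · exact hmemA z (by simp [hz])
                  · exact haS
                  · exact hpS
                  · exact hqS
                  · exact hrS
                · exact (triples_mid (f := cup) a p [q, r] A₀).mpr
                    ⟨hAtrip, hapq a haS hap, hpqr, trivial⟩
                · simp only [List.length_append, List.length_cons, List.length_nil] at hABlen ⊢
                  omega
            · have hbS : b ∈ S := hmemB b (by simp)
              have hrb : r < b := (List.isChain_cons_cons.mp hchB).1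
              refine ⟨b, hbS, hrb, ?_⟩
              intro hqrb
              rcases decomp_last2 hAe with rfl | ⟨A₀, a, rfl⟩
              · refine no_ncup hncf (L := p :: q :: r :: b :: B₀)
                  ⟨by simp, List.isChain_cons_cons.mpr ⟨hpq, List.isChain_cons_cons.mpr ⟨hlt, hchB⟩⟩, ?_,
                    ⟨hpqr, hqrb, hBtrip⟩⟩ ?_
                · intro z hz
                  rcases List.mem_cons.mp hz with rfl | hz
                  · exact hpS
                  rcases List.mem_cons.mp hz with rfl | hz
                  · exact hqS
                  · exact hmemB z hz
                · simp only [List.length_cons, List.length_nil] at hABlen ⊢; omega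
              · have haS : a ∈ S := hmemA a (by simp)
                have hap : a < p :=
                  (List.isChain_cons_cons.mp (List.isChain_append.mp hchA).2.1).1
                refine no_ncup hncf (L := A₀ ++ a :: p :: q :: r :: b :: B₀)
                  ⟨by simp, ?_, ?_, ?_⟩ ?_
                · have he : A₀ ++ a :: p :: q :: r :: b :: B₀ =
                      (A₀ ++ [a, p]) ++ (q :: r :: b :: B₀) := by simp
                  rw [he]
                  refine List.isChain_append.mpr
                    ⟨hchA, List.isChain_cons_cons.mpr ⟨hlt, hchB⟩, ?_⟩
                  intro x hx y hy
                  rw [Option.mem_def, hAe] at hx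
                  rw [Option.mem_def] at hy
                  simp only [List.head?_cons, Option.some.injEq] at hy
                  obtain rfl : p = x := Option.some.inj hx
                  obtain rfl : q = y := hy
                  exact hpq
                · intro z hz
                  have hz' : z ∈ A₀ ∨ z = a ∨ z = p ∨ z = q ∨ z = r ∨ z = b ∨ z ∈ B₀ := by
                    simp only [List.mem_append, List.mem_cons] at hz; tauto
                  rcases hz' with hz | rfl | rfl | rfl | rfl | rfl | hz
                  · exact hmemA z (by simp [hz])
                  · exact hmemA z (by simp)
                  · exact hpS
                  · exact hqS
                  · exact hrS
                  · exact hbS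
                  · exact hmemB z (by simp [hz])
                · exact (triples_mid (f := cup) a p (q :: r :: b :: B₀) A₀).mpr
                    ⟨hAtrip, hapq a haS hap, hpqr, hqrb, hBtrip⟩
                · simp only [List.length_append, List.length_cons, List.length_nil]
                    at hABlen ⊢
                  omega
          obtain ⟨a', ha'S, ha'q, hK4⟩ : ∃ a', a' ∈ S ∧ a' < q ∧ ¬ cup a' q r := by
            obtain ⟨B₂', rfl⟩ : ∃ X, B' = s :: X := by
              rcases B' with _ | ⟨b0, X⟩
              · simp at hBs'
              · obtain rfl : b0 = s := Option.some.inj hBs'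
                exact ⟨X, rfl⟩
            rcases decomp_last2 hAe' with rfl | ⟨A₀', a', rfl⟩
            · exfalso
              rcases B₂' with _ | ⟨b', B₀'⟩
              · simp only [List.length_cons, List.length_nil] at hABlen'; omega
              · have hb'S : b' ∈ S := hmemB' b' (by simp)
                have hsb' : s < b' := (List.isChain_cons_cons.mp hchB').1
                refine no_ncup hncf (L := q :: r :: s :: b' :: B₀')
                  ⟨by simp, List.isChain_cons_cons.mpr ⟨hlt, List.isChain_cons_cons.mpr ⟨hrs, hchB'⟩⟩, ?_,
                    ⟨hqrs, hrsw b' hb'S hsb', hB'trip⟩⟩ ?_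
                · intro z hz
                  rcases List.mem_cons.mp hz with rfl | hz
                  · exact hqS
                  rcases List.mem_cons.mp hz with rfl | hz
                  · exact hrS
                  · exact hmemB' z hz
                · simp only [List.length_cons, List.length_nil] at hABlen' ⊢; omega
            · have ha'S : a' ∈ S := hmemA' a' (by simp)
              have ha'q : a' < q :=
                (List.isChain_cons_cons.mp (List.isChain_append.mp hchA').2.1).1
              refine ⟨a', ha'S, ha'q, ?_⟩
              intro ha'qr
              rcases B₂' with _ | ⟨b', B₀'⟩
              · refine no_ncup hncf (L := A₀' ++ [a', q, r, s]) ⟨by simp, ?_, ?_, ?_⟩ ?_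
                · have h1 : List.Chain' (· < ·) ((A₀' ++ [a', q]) ++ [r]) :=
                    chain'_concat hchA' hAe' hlt
                  have h2 : List.Chain' (· < ·) (((A₀' ++ [a', q]) ++ [r]) ++ [s]) :=
                    chain'_concat h1 (List.getLast?_concat) hrs
                  have he : ((A₀' ++ [a', q]) ++ [r]) ++ [s] = A₀' ++ [a', q, r, s] := by simp
                  rwa [he] at h2
                · intro z hz
                  simp only [List.mem_append, List.mem_cons, List.not_mem_nil, or_false] at hz
                  rcases hz with hz | rfl | rfl | rfl | rfl
                  · exact hmemA' z (by simp [hz])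
                  · exact ha'S
                  · exact hqS
                  · exact hrS
                  · exact hsS
                · exact (triples_mid (f := cup) a' q [r, s] A₀').mpr
                    ⟨hA'trip, ha'qr, hqrs, trivial⟩
                · simp only [List.length_append, List.length_cons, List.length_nil]
                    at hABlen' ⊢
                  omega
              · have hb'S : b' ∈ S := hmemB' b' (by simp)
                have hsb' : s < b' := (List.isChain_cons_cons.mp hchB').1
                refine no_ncup hncf (L := A₀' ++ a' :: q :: r :: s :: b' :: B₀')
                  ⟨by simp, ?_, ?_, ?_⟩ ?_
                · have he : A₀' ++ a' :: q :: r :: s :: b' :: B₀' =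
                      (A₀' ++ [a', q]) ++ (r :: s :: b' :: B₀') := by simp
                  rw [he]
                  refine List.isChain_append.mpr
                    ⟨hchA', List.isChain_cons_cons.mpr ⟨hrs, hchB'⟩, ?_⟩
                  intro x hx y hy
                  rw [Option.mem_def, hAe'] at hx
                  rw [Option.mem_def] at hy
                  simp only [List.head?_cons, Option.some.injEq] at hy
                  obtain rfl : q = x := Option.some.inj hx
                  obtain rfl : r = y := hy
                  exact hlt
                · intro z hz
                  have hz' : z ∈ A₀' ∨ z = a' ∨ z = q ∨ z = r ∨ z = s ∨ z = b' ∨ z ∈ B₀' := by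
                    simp only [List.mem_append, List.mem_cons] at hz; tauto
                  rcases hz' with hz | rfl | rfl | rfl | rfl | rfl | hz
                  · exact hmemA' z (by simp [hz])
                  · exact hmemA' z (by simp)
                  · exact hqS
                  · exact hrS
                  · exact hsS
                  · exact hb'S
                  · exact hmemB' z (by simp [hz])
                · exact (triples_mid (f := cup) a' q (r :: s :: b' :: B₀') A₀').mpr
                    ⟨hA'trip, ha'qr, hqrs, hrsw b' hb'S hsb', hB'trip⟩
                · simp only [List.length_append, List.length_cons, List.length_nil]
                    at hABlen' ⊢
                  omega
          exact no_cap4 h4 ha'S hqS hrS hbS ha'q hlt hrb hK4 hK3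
        · exact mk_gon hqS hrS hsS hlt hrs hqrs hC2 hC2len hC2s hC2e
      · exact mk_gon hpS hqS hrS hpq hlt hpqr hC1 hC1len hC1s hC1e
end
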